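/- For the Puiseux monoid P = ⟨(p² − 1)/p : p prime⟩, 0 is not a limit point of P, P is not bounded, and ρ_k(P) < ∞ for all k ∈ ℕ. -/

import Mathlib

/-- A Puiseux monoid: an additive submonoid of ℚ consisting of nonnegative rationals. -/
def PM.Puiseux (P : AddSubmonoid ℚ) : Prop := ∀ x ∈ P, 0 ≤ x

/-- `a` is an atom of `P`. -/
def PM.IsAtom (P : AddSubmonoid ℚ) (a : ℚ) : Prop :=
  a ∈ P ∧ a ≠ 0 ∧ ∀ x ∈ P, ∀ y ∈ P, a = x + y → x = 0 ∨ y = 0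

/-- A factorization of `x` is a multiset of atoms of `P` summing to `x`. -/
def PM.IsFactorization (P : AddSubmonoid ℚ) (x : ℚ) (z : Multiset ℚ) : Prop :=
  (∀ a ∈ z, PM.IsAtom P a) ∧ z.sum = x

/-- The set of lengths of `x`. -/
def PM.Lengths (P : AddSubmonoid ℚ) (x : ℚ) : Set ℕ :=
  {n | ∃ z : Multiset ℚ, PM.IsFactorization P x z ∧ Multiset.card z = n}

/-- `P` is atomic: it is generated by its set of atoms. -/
def PM.Atomic (P : AddSubmonoid ℚ) : Prop :=
  AddSubmonoid.closure {a | PM.IsAtom P a} = P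

/-- The union of sets of lengths `U_k(P)`. -/
def PM.U (P : AddSubmonoid ℚ) (k : ℕ) : Set ℕ :=
  {l | ∃ x ∈ P, k ∈ PM.Lengths P x ∧ l ∈ PM.Lengths P x}

namespace Stmt18Aux

/-- The generator associated to the prime `p`. -/
noncomputable def g (p : ℕ) : ℚ := ((p : ℚ) ^ 2 - 1) / p

/-- The generating set. -/
def S : Set ℚ := {q : ℚ | ∃ p : ℕ, p.Prime ∧ q = ((p : ℚ) ^ 2 - 1) / p}

lemma g_mem_S {p : ℕ} (hp : p.Prime) : g p ∈ S := ⟨p, hp, rfl⟩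

lemma mem_S_iff {a : ℚ} : a ∈ S ↔ ∃ p : ℕ, p.Prime ∧ a = g p := Iff.rfl

lemma two_le_cast {p : ℕ} (hp : p.Prime) : (2 : ℚ) ≤ p := by exact_mod_cast hp.two_le

lemma g_ge {p : ℕ} (hp : p.Prime) : (3 : ℚ) / 2 ≤ g p := by
  have h2 := two_le_cast hp
  have hp0 : (0 : ℚ) < p := by linarith
  rw [g, le_div_iff₀ hp0]; nlinarith

lemma g_pos {p : ℕ} (hp : p.Prime) : 0 < g p := lt_of_lt_of_le (by norm_num) (g_ge hp)

lemma g_lt {p : ℕ} (hp : p.Prime) : g p < p := by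
  have h2 := two_le_cast hp
  have hp0 : (0 : ℚ) < p := by linarith
  rw [g, div_lt_iff₀ hp0]; nlinarith

lemma g_gt {p : ℕ} (hp : p.Prime) : (p : ℚ) - 1 < g p := by
  have h2 := two_le_cast hp
  have hp0 : (0 : ℚ) < p := by linarith
  rw [g, lt_div_iff₀ hp0]; nlinarith

lemma den_g_dvd {p : ℕ} (hp : p.Prime) : (g p).den ∣ p := by
  have h : g p = Rat.divInt ((p : ℤ) ^ 2 - 1) (p : ℤ) := by
    rw [Rat.divInt_eq_div, g]; push_cast; ring
  have := Rat.den_dvd ((p : ℤ) ^ 2 - 1) (p : ℤ)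
  rw [← h] at this
  exact_mod_cast this

/-- Key arithmetic fact: if `m * g q` has denominator coprime to `q`, then `q ∣ m`. -/
lemma key {q : ℕ} (hq : q.Prime) (m : ℤ) (t : ℚ) (ht : ¬ (q ∣ t.den))
    (h : (m : ℚ) * g q = t) : (q : ℤ) ∣ m := by
  have hq0 : (q : ℚ) ≠ 0 := Nat.cast_ne_zero.mpr hq.pos.ne'
  have hx : t = Rat.divInt (m * ((q : ℤ) ^ 2 - 1)) (q : ℤ) := by
    rw [Rat.divInt_eq_div, ← h, g]; push_cast; field_simp
  have hden : (t.den : ℤ) ∣ (q : ℤ) := hx ▸ Rat.den_dvd _ _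
  have hden' : t.den ∣ q := by exact_mod_cast hden
  rcases hq.eq_one_or_self_of_dvd _ hden' with h1 | h1
  · have hnum : (t.num : ℚ) = t := Rat.coe_int_num_of_den_eq_one h1
    have hqq : (t.num : ℚ) * q = m * ((q : ℚ) ^ 2 - 1) := by
      rw [hnum, ← h, g]; field_simp
    have hz : t.num * (q : ℤ) = m * ((q : ℤ) ^ 2 - 1) := by exact_mod_cast hqq
    have hdvd : (q : ℤ) ∣ m * ((q : ℤ) ^ 2 - 1) := ⟨t.num, by linarith⟩
    have hqp : Prime (q : ℤ) := Nat.prime_iff_prime_int.mp hq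
    rcases hqp.dvd_mul.mp hdvd with h2 | h2
    · exact h2
    · exfalso
      have h3 : (q : ℤ) ∣ (q : ℤ) ^ 2 - ((q : ℤ) ^ 2 - 1) := dvd_sub ⟨q, by ring⟩ h2
      simp only [sub_sub_cancel] at h3
      have := Int.le_of_dvd one_pos h3
      have h2q : (2 : ℤ) ≤ q := by exact_mod_cast hq.two_le
      linarith
  · exact absurd (h1 ▸ dvd_refl q) ht

lemma q_not_dvd_den_g {q r : ℕ} (hq : q.Prime) (hr : r.Prime) (hne : g r ≠ g q) :
    ¬ q ∣ (g r).den := fun hd => by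
  have : q ∣ r := hd.trans (den_g_dvd hr)
  exact hne (by rw [(Nat.prime_dvd_prime_iff_eq hq hr).mp this])

lemma den_g_self {q : ℕ} (hq : q.Prime) : q ∣ (g q).den := by
  by_contra h
  have := key hq 1 (g q) h (one_mul _)
  have h1 : (q : ℤ) ≤ 1 := Int.le_of_dvd one_pos this
  have h2 : (2 : ℤ) ≤ q := by exact_mod_cast hq.two_le
  linarith

lemma sum_split {q : ℕ} (hq : q.Prime) (z : Multiset ℚ) (hz : ∀ a ∈ z, a ∈ S) :
    ∃ t : ℚ, ¬ (q ∣ t.den) ∧ 0 ≤ t ∧ z.sum = (z.count (g q)) • g q + t := by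
  classical
  induction z using Multiset.induction with
  | empty =>
    refine ⟨0, ?_, le_refl 0, by simp⟩
    simpa using hq.one_lt.ne'
  | cons a z ih =>
    obtain ⟨t, ht, ht0, hsum⟩ := ih (fun b hb => hz b (Multiset.mem_cons_of_mem hb))
    obtain ⟨r, hr, rfl⟩ : ∃ r : ℕ, r.Prime ∧ a = g r := hz a (Multiset.mem_cons_self _ _)
    by_cases hag : g r = g q
    · refine ⟨t, ht, ht0, ?_⟩
      rw [Multiset.sum_cons, hsum, hag, Multiset.count_cons_self, succ_nsmul]
      ring
    · refine ⟨g r + t, ?_, by linarith [g_ge hr], ?_⟩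
      · intro hd
        have hmul := (Rat.add_den_dvd (g r) t)
        rcases (Nat.Prime.dvd_mul hq).mp (hd.trans hmul) with h | h
        · exact q_not_dvd_den_g hq hr hag h
        · exact ht h
      · rw [Multiset.sum_cons, hsum, Multiset.count_cons_of_ne (Ne.symm hag)]
        ring

lemma count_cong {q : ℕ} (hq : q.Prime) (z w : Multiset ℚ)
    (hz : ∀ a ∈ z, a ∈ S) (hw : ∀ a ∈ w, a ∈ S) (hs : z.sum = w.sum) :
    (q : ℤ) ∣ ((w.count (g q) : ℤ) - z.count (g q)) := by
  classical
  obtain ⟨t, ht, -, hzt⟩ := sum_split hq z hz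
  obtain ⟨u, hu, -, hwu⟩ := sum_split hq w hw
  refine key hq _ (t - u) ?_ ?_
  · intro hd
    have hmul : (t - u).den ∣ t.den * u.den := by
      rw [sub_eq_add_neg]
      have := Rat.add_den_dvd t (-u)
      rwa [Rat.den_neg_eq_den] at this
    rcases (Nat.Prime.dvd_mul hq).mp (hd.trans hmul) with h | h
    · exact ht h
    · exact hu h
  · have h1 : (z.count (g q) : ℚ) * g q + t = (w.count (g q) : ℚ) * g q + u := by
      rw [← nsmul_eq_mul, ← nsmul_eq_mul, ← hzt, ← hwu, hs]
    push_cast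
    linarith

lemma card_bound (z w : Multiset ℚ) (hz : ∀ a ∈ z, a ∈ S) (hw : ∀ a ∈ w, a ∈ S)
    (hs : z.sum = w.sum) :
    Multiset.card w ≤ Multiset.card z + (Multiset.card z) ^ 2 := by
  classical
  set k := Multiset.card z with hk
  set F : Finset ℚ := z.toFinset ∪ w.toFinset with hF
  have hzF : ∀ a ∈ z, a ∈ F := fun a ha =>
    Finset.mem_union_left _ (Multiset.mem_toFinset.mpr ha)
  have hwF : ∀ a ∈ w, a ∈ F := fun a ha =>
    Finset.mem_union_right _ (Multiset.mem_toFinset.mpr ha)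
  have hck : ∑ a ∈ F, z.count a = k := Multiset.sum_count_eq_card hzF
  have hdl : ∑ a ∈ F, w.count a = Multiset.card w := Multiset.sum_count_eq_card hwF
  have hzsum : z.sum = ∑ a ∈ F, (z.count a : ℚ) * a := by
    rw [Finset.sum_multiset_count_of_subset z F (fun a ha => hzF a (Multiset.mem_toFinset.mp ha))]
    exact Finset.sum_congr rfl (fun a _ => (nsmul_eq_mul _ _))
  have hwsum : w.sum = ∑ a ∈ F, (w.count a : ℚ) * a := by
    rw [Finset.sum_multiset_count_of_subset w F (fun a ha => hwF a (Multiset.mem_toFinset.mp ha))]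
    exact Finset.sum_congr rfl (fun a _ => (nsmul_eq_mul _ _))
  have hFS : ∀ a ∈ F, a ∈ S := by
    intro a ha
    rcases Finset.mem_union.mp ha with h | h
    · exact hz a (Multiset.mem_toFinset.mp h)
    · exact hw a (Multiset.mem_toFinset.mp h)
  have ha1 : ∀ a ∈ F, (1 : ℚ) ≤ a := by
    intro a ha
    obtain ⟨r, hr, rfl⟩ := mem_S_iff.mp (hFS a ha)
    linarith [g_ge hr]
  have hzero : ∑ a ∈ F, ((w.count a : ℚ) - z.count a) * a = 0 := by
    simp only [sub_mul]
    rw [Finset.sum_sub_distrib, ← hwsum, ← hzsum, hs, sub_self]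
  have hmax : ∀ x : ℚ, max x 0 - max (-x) 0 = x := by
    intro x; rw [max_def, max_def]; split_ifs <;> linarith
  have hswap : ∑ a ∈ F, max ((w.count a : ℚ) - z.count a) 0 * a
      = ∑ a ∈ F, max ((z.count a : ℚ) - w.count a) 0 * a := by
    have hdiff : ∑ a ∈ F, max ((w.count a : ℚ) - z.count a) 0 * a
        - ∑ a ∈ F, max ((z.count a : ℚ) - w.count a) 0 * a
        = ∑ a ∈ F, ((w.count a : ℚ) - z.count a) * a := by
      rw [← Finset.sum_sub_distrib]
      refine Finset.sum_congr rfl (fun a _ => ?_)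
      have hnx : (z.count a : ℚ) - w.count a = -((w.count a : ℚ) - z.count a) := by ring
      rw [hnx, ← sub_mul, hmax]
    rw [hzero] at hdiff
    linarith
  have hterm : ∀ a ∈ F, max ((z.count a : ℚ) - w.count a) 0 * a ≤ (z.count a : ℚ) * k := by
    intro a ha
    obtain ⟨r, hr, rfl⟩ := mem_S_iff.mp (hFS a ha)
    have hck' : z.count (g r) ≤ k := hk ▸ Multiset.count_le_card _ _
    have hkq : (z.count (g r) : ℚ) ≤ (k : ℚ) := by exact_mod_cast hck'
    rcases le_or_gt ((z.count (g r) : ℚ) - w.count (g r)) 0 with h | h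
    · rw [max_eq_right h, zero_mul]
      positivity
    · rw [max_eq_left h.le]
      have hdvd := count_cong hr z w hz hw hs
      have hdvd' : (r : ℤ) ∣ ((z.count (g r) : ℤ) - w.count (g r)) := by
        have := dvd_neg.mpr hdvd
        rwa [neg_sub] at this
      have hpos : (0 : ℤ) < (z.count (g r) : ℤ) - w.count (g r) := by exact_mod_cast h
      have hle : (r : ℤ) ≤ (z.count (g r) : ℤ) - w.count (g r) := Int.le_of_dvd hpos hdvd'
      have hleQ : (r : ℚ) ≤ (z.count (g r) : ℚ) - w.count (g r) := by exact_mod_cast hle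
      have hgr := g_lt hr
      have hg0 : (0 : ℚ) ≤ g r := by linarith [g_ge hr]
      have hd0 : (0 : ℚ) ≤ (w.count (g r) : ℚ) := by positivity
      nlinarith
  have hQ : (Multiset.card w : ℚ) ≤ (k : ℚ) + (k : ℚ) ^ 2 := by
    have e1 : (Multiset.card w : ℚ) - k
        = ∑ a ∈ F, ((w.count a : ℚ) - z.count a) := by
      rw [Finset.sum_sub_distrib]
      have c1 : (∑ a ∈ F, (w.count a : ℚ)) = (Multiset.card w : ℚ) := by
        exact_mod_cast congrArg (Nat.cast (R := ℚ)) hdl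
      have c2 : (∑ a ∈ F, (z.count a : ℚ)) = (k : ℚ) := by
        exact_mod_cast congrArg (Nat.cast (R := ℚ)) hck
      rw [c1, c2]
    have e2 : ∑ a ∈ F, ((w.count a : ℚ) - z.count a)
        ≤ ∑ a ∈ F, max ((w.count a : ℚ) - z.count a) 0 :=
      Finset.sum_le_sum (fun a _ => le_max_left _ _)
    have e3 : ∑ a ∈ F, max ((w.count a : ℚ) - z.count a) 0
        ≤ ∑ a ∈ F, max ((w.count a : ℚ) - z.count a) 0 * a :=
      Finset.sum_le_sum (fun a ha => le_mul_of_one_le_right (le_max_right _ _) (ha1 a ha))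
    have e4 : ∑ a ∈ F, max ((z.count a : ℚ) - w.count a) 0 * a
        ≤ ∑ a ∈ F, (z.count a : ℚ) * k := Finset.sum_le_sum hterm
    have e5 : ∑ a ∈ F, (z.count a : ℚ) * k = (k : ℚ) ^ 2 := by
      rw [← Finset.sum_mul]
      have c2 : (∑ a ∈ F, (z.count a : ℚ)) = (k : ℚ) := by
        exact_mod_cast congrArg (Nat.cast (R := ℚ)) hck
      rw [c2, sq]
    rw [hswap] at e3
    linarith
  exact_mod_cast hQ

/-- Every element of the closure is `0` or at least `3/2`. -/
lemma P_lb {x : ℚ} (hx : x ∈ AddSubmonoid.closure S) : x = 0 ∨ (3 : ℚ) / 2 ≤ x := by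
  induction hx using AddSubmonoid.closure_induction with
  | mem a ha =>
    obtain ⟨p, hp, rfl⟩ := ha
    exact Or.inr (g_ge hp)
  | zero => exact Or.inl rfl
  | add x y hx hy ihx ihy =>
    rcases ihx with h | h <;> rcases ihy with h' | h'
    · exact Or.inl (by rw [h, h', add_zero])
    · exact Or.inr (by rw [h, zero_add]; exact h')
    · exact Or.inr (by rw [h', add_zero]; exact h)
    · exact Or.inr (by linarith)

/-- Every atom of `P` is a generator. -/
lemma atom_mem_S {a : ℚ} (ha : PM.IsAtom (AddSubmonoid.closure S) a) : a ∈ S := by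
  obtain ⟨haP, ha0, hatom⟩ := ha
  obtain ⟨z, hzS, hzsum⟩ := AddSubmonoid.exists_multiset_of_mem_closure haP
  rcases Multiset.empty_or_exists_mem z with rfl | ⟨b, hb⟩
  · exact absurd hzsum.symm ha0
  obtain ⟨z', rfl⟩ := Multiset.exists_cons_of_mem hb
  have hbP : b ∈ AddSubmonoid.closure S := AddSubmonoid.subset_closure (hzS b hb)
  have hz'P : z'.sum ∈ AddSubmonoid.closure S :=
    AddSubmonoid.multiset_sum_mem _ _
      (fun c hc => AddSubmonoid.subset_closure (hzS c (Multiset.mem_cons_of_mem hc)))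
  rw [Multiset.sum_cons] at hzsum
  rcases hatom b hbP z'.sum hz'P hzsum.symm with h | h
  · exfalso
    obtain ⟨p, hp, rfl⟩ := hzS b hb
    have := g_pos hp
    rw [show g p = ((p : ℚ) ^ 2 - 1) / p from rfl] at this
    exact absurd h (ne_of_gt this)
  · rw [← hzsum, h, add_zero]
    exact hzS b hb

/-- Elements of `P` smaller than `g Q` have denominator coprime to `Q`. -/
lemma small_den {Q : ℕ} (hQ : Q.Prime) {x : ℚ} (hx : x ∈ AddSubmonoid.closure S)
    (hlt : x < g Q) : ¬ Q ∣ x.den := by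
  obtain ⟨z, hzS, hzsum⟩ := AddSubmonoid.exists_multiset_of_mem_closure hx
  obtain ⟨t, ht, ht0, hsplit⟩ := sum_split hQ z hzS
  have hc0 : z.count (g Q) = 0 := by
    by_contra hc
    have h1 : 1 ≤ z.count (g Q) := Nat.one_le_iff_ne_zero.mpr hc
    have : g Q ≤ x := by
      rw [← hzsum, hsplit]
      have : (1 : ℚ) * g Q ≤ (z.count (g Q) : ℚ) * g Q :=
        mul_le_mul_of_nonneg_right (by exact_mod_cast h1) (g_pos hQ).le
      rw [nsmul_eq_mul]
      linarith
    linarith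
  rw [hc0, zero_nsmul, zero_add] at hsplit
  rw [← hzsum, hsplit]
  exact ht

end Stmt18Aux

open Stmt18Aux in
theorem stmt18 :
    let P := AddSubmonoid.closure
      {q : ℚ | ∃ p : ℕ, p.Prime ∧ q = ((p : ℚ) ^ 2 - 1) / p}
    (∃ q : ℚ, 0 < q ∧ ∀ x ∈ P, x ≠ 0 → q ≤ x) ∧
    (¬ ∃ A : Set ℚ, BddAbove A ∧ AddSubmonoid.closure A = P) ∧
    ∀ k : ℕ, (PM.U P k).Finite := by
  intro P
  have hPS : P = AddSubmonoid.closure S := rfl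
  refine ⟨⟨3/2, by norm_num, fun x hx hx0 => ?_⟩, ?_, ?_⟩
  · rcases P_lb (hPS ▸ hx) with h | h
    · exact absurd h hx0
    · exact h
  · rintro ⟨A, ⟨M, hM⟩, hA⟩
    -- find a large prime
    obtain ⟨n, hn⟩ := exists_nat_gt M
    obtain ⟨Q, hQn, hQ⟩ := Nat.exists_infinite_primes (n + 2)
    have hQcast : (n : ℚ) + 2 ≤ (Q : ℚ) := by exact_mod_cast hQn
    have hMQ : M < g Q := by
      have := g_gt hQ
      linarith
    -- the submonoid of rationals with denominator coprime to Q
    set T : AddSubmonoid ℚ :=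
      { carrier := {x : ℚ | ¬ Q ∣ x.den}
        zero_mem' := by
          simp only [Set.mem_setOf_eq, Rat.den_ofNat]
          simpa using hQ.one_lt.ne'
        add_mem' := by
          intro a b ha hb hd
          rcases (Nat.Prime.dvd_mul hQ).mp (hd.trans (Rat.add_den_dvd a b)) with h | h
          · exact ha h
          · exact hb h } with hT
    have hAT : A ⊆ ↑T := by
      intro a haA
      have haP : a ∈ P := hA ▸ AddSubmonoid.subset_closure haA
      have haM : a ≤ M := hM haA
      exact small_den hQ (hPS ▸ haP) (lt_of_le_of_lt haM hMQ)
    have hle : AddSubmonoid.closure A ≤ T := (AddSubmonoid.closure_le).mpr hAT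
    have hgQ : g Q ∈ P := hPS ▸ AddSubmonoid.subset_closure (g_mem_S hQ)
    have : g Q ∈ T := hle (hA ▸ hgQ)
    exact this (den_g_self hQ)
  · intro k
    refine Set.Finite.subset (Set.finite_Iic (k + k ^ 2)) ?_
    rintro l ⟨x, hx, ⟨z, ⟨hza, hzs⟩, hzk⟩, ⟨w, ⟨hwa, hws⟩, hwl⟩⟩
    have hzS : ∀ a ∈ z, a ∈ S := fun a ha => atom_mem_S (hza a ha)
    have hwS : ∀ a ∈ w, a ∈ S := fun a ha => atom_mem_S (hwa a ha)
    have := card_bound z w hzS hwS (by rw [hzs, hws])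
    rw [hzk, hwl] at this
    exact Set.mem_Iic.mpr this
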